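/- Goepfert–Tammer–Zălinescu maximal principle (Theorem 1.1): Let Y be a real separated locally convex topological vector space, K ⊆ Y a convex cone, and k⁰ ∈ K \ (−cl(K)) where cl(K) is the topological closure of K. Let (X,d) be a complete metric space, and define the quasi-order ⪰ on X × Y by (x₁,y₁) ⪰ (x₂,y₂) iff k⁰·d(x₁,x₂) ≤_K y₁ − y₂ (i.e. y₁ − y₂ − d(x₁,x₂)·k⁰ ∈ K). Let A ⊆ X × Y be nonempty and assume: (i) P_Y(A) is bounded below modulo K: there exists ỹ ∈ Y with y − ỹ ∈ K for all (x,y) ∈ A; (ii) if ((x_n,y_n)) ⊆ A is ⪰-ascending and x_n → x in X, then x ∈ P_X(A) and there exists y with (x,y) ∈ A such that (x_n,y_n) ⪰ (x,y) for all n. Then for each (x₀,y₀) ∈ A there exists (x̄,ȳ) ∈ A such that (x₀,y₀) ⪰ (x̄,ȳ) (hence y₀ ≥_K ȳ), and for every (x′,y′) ∈ A with (x̄,ȳ) ⪰ (x′,y′) one has x̄ = x′. -/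

import Mathlib

/-- The product quasi-order on `X × Y` attached to `k⁰`:
`(x₁,y₁) ⪰ (x₂,y₂)` iff `k⁰·d(x₁,x₂) ≤_K y₁ − y₂`. -/
def prodSuccLin {Y : Type*} [AddCommGroup Y] [Module ℝ Y]
    (K : Set Y) (k0 : Y) {X : Type*} [MetricSpace X]
    (p q : X × Y) : Prop :=
  p.2 - q.2 - dist p.1 q.1 • k0 ∈ K

theorem prodSuccLin_trans' {Y : Type*} [AddCommGroup Y] [Module ℝ Y]
    (K : Set Y)
    (hKcone : ∀ a b : ℝ, 0 ≤ a → 0 ≤ b → ∀ x ∈ K, ∀ y ∈ K, a • x + b • y ∈ K)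
    (k0 : Y) (hk0K : k0 ∈ K) {X : Type*} [MetricSpace X]
    {p q r : X × Y} (h1 : prodSuccLin K k0 p q) (h2 : prodSuccLin K k0 q r) :
    prodSuccLin K k0 p r := by
  have hsum := hKcone 1 1 zero_le_one zero_le_one _ h1 _ h2
  have hd : 0 ≤ dist p.1 q.1 + dist q.1 r.1 - dist p.1 r.1 := by
    have := dist_triangle p.1 q.1 r.1; linarith
  have hfin := hKcone 1 (dist p.1 q.1 + dist q.1 r.1 - dist p.1 r.1)
    zero_le_one hd _ hsum _ hk0K
  unfold prodSuccLin at *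
  convert hfin using 1
  module

/-- Goepfert–Tammer–Zălinescu maximal principle (Theorem 1.1). -/
theorem goepfert_tammer_zalinescu_maximal_principle
    {Y : Type*} [AddCommGroup Y] [Module ℝ Y] [TopologicalSpace Y]
    [IsTopologicalAddGroup Y] [ContinuousSMul ℝ Y] [T2Space Y]
    [LocallyConvexSpace ℝ Y]
    (K : Set Y)
    (hKcone : ∀ a b : ℝ, 0 ≤ a → 0 ≤ b → ∀ x ∈ K, ∀ y ∈ K, a • x + b • y ∈ K)
    (k0 : Y) (hk0 : k0 ∈ K \ (-closure K))
    {X : Type*} [MetricSpace X] [CompleteSpace X]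
    (A : Set (X × Y)) (hA : A.Nonempty)
    (hbdd : ∃ ytilde : Y, ∀ p ∈ A, p.2 - ytilde ∈ K)
    (hlim : ∀ a : ℕ → X × Y, (∀ n : ℕ, a n ∈ A) →
      (∀ n m : ℕ, n ≤ m → prodSuccLin K k0 (a n) (a m)) →
      ∀ x : X, Filter.Tendsto (fun n => (a n).1) Filter.atTop (nhds x) →
        ∃ y : Y, (x, y) ∈ A ∧ ∀ n : ℕ, prodSuccLin K k0 (a n) (x, y)) :
    ∀ p ∈ A, ∃ q ∈ A, prodSuccLin K k0 p q ∧ p.2 - q.2 ∈ K ∧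
      ∀ r ∈ A, prodSuccLin K k0 q r → q.1 = r.1 := by
  classical
  obtain ⟨ytilde, hyt⟩ := hbdd
  -- basic cone facts
  have h0K : (0 : Y) ∈ K := by
    have := hKcone 0 0 le_rfl le_rfl _ hk0.1 _ hk0.1; simpa using this
  have hrefl : ∀ p : X × Y, prodSuccLin K k0 p p := by
    intro p; unfold prodSuccLin; simpa [dist_self] using h0K
  have htrans : ∀ {p q r : X × Y}, prodSuccLin K k0 p q →
      prodSuccLin K k0 q r → prodSuccLin K k0 p r :=
    fun h1 h2 => prodSuccLin_trans' K hKcone k0 hk0.1 h1 h2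
  have hnk0 : -k0 ∉ closure K := fun h => hk0.2 (Set.mem_neg.2 h)
  -- separation
  have hconvK : Convex ℝ K := fun x hx y hy a b ha hb _ => hKcone a b ha hb x hx y hy
  obtain ⟨f, u, hfu, hf⟩ :=
    geometric_hahn_banach_point_closed hconvK.closure isClosed_closure hnk0
  have hu0 : u < 0 := by
    have := hf 0 (subset_closure h0K); simpa using this
  have hfK : ∀ y ∈ K, 0 ≤ f y := by
    intro y hy
    by_contra h
    push_neg at h
    have ht : (0 : ℝ) ≤ (u - 1) / f y :=
      div_nonneg_of_nonpos (by linarith) h.le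
    have hmem : ((u - 1) / f y) • y ∈ K := by
      simpa using hKcone ((u - 1) / f y) 0 ht le_rfl y hy y hy
    have h2 := hf _ (subset_closure hmem)
    rw [map_smul, smul_eq_mul, div_mul_cancel₀ _ h.ne] at h2
    linarith
  have hck : 0 < f k0 := by
    have : f (-k0) < u := hfu
    rw [map_neg] at this; linarith
  set c := f k0 with hc
  -- key inequality
  have hkey : ∀ p q : X × Y, prodSuccLin K k0 p q →
      c * dist p.1 q.1 ≤ f p.2 - f q.2 := by
    intro p q h
    have h0 := hfK _ h
    rw [map_sub, map_sub, map_smul, smul_eq_mul] at h0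
    nlinarith [mul_comm c (dist p.1 q.1)]
  have hlow : ∀ p ∈ A, f ytilde ≤ f p.2 := by
    intro p hp
    have := hfK _ (hyt p hp)
    rw [map_sub] at this; linarith
  intro p₀ hp₀
  -- the successor sets and their infima
  set S : X × Y → Set (X × Y) := fun p => {q | q ∈ A ∧ prodSuccLin K k0 p q} with hS
  set t : X × Y → ℝ := fun p => sInf ((fun q : X × Y => f q.2) '' S p) with ht
  have hbddS : ∀ p : X × Y, BddBelow ((fun q : X × Y => f q.2) '' S p) := by
    intro p
    refine ⟨f ytilde, ?_⟩
    rintro _ ⟨q, ⟨hqA, _⟩, rfl⟩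
    exact hlow q hqA
  have hstep : ∀ n : ℕ, ∀ p : X × Y, ∃ q : X × Y, p ∈ A →
      (q ∈ A ∧ prodSuccLin K k0 p q) ∧ f q.2 < t p + (1 / 2) ^ n := by
    intro n p
    by_cases hp : p ∈ A
    · have hne : ((fun q : X × Y => f q.2) '' S p).Nonempty :=
        ⟨f p.2, ⟨p, ⟨hp, hrefl p⟩, rfl⟩⟩
      obtain ⟨v, ⟨q, hq, rfl⟩, hv⟩ :=
        Real.lt_sInf_add_pos hne (by positivity : (0 : ℝ) < (1 / 2) ^ n)
      exact ⟨q, fun _ => ⟨hq, hv⟩⟩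
    · exact ⟨p, fun h => absurd h hp⟩
  choose step hstepspec using hstep
  obtain ⟨a, ha0, haS⟩ : ∃ a : ℕ → X × Y, a 0 = p₀ ∧ ∀ n, a (n + 1) = step n (a n) :=
    ⟨fun n => Nat.rec p₀ (fun n prev => step n prev) n, rfl, fun n => rfl⟩
  have haA : ∀ n, a n ∈ A := by
    intro n
    induction n with
    | zero => rw [ha0]; exact hp₀
    | succ n ih => rw [haS n]; exact (hstepspec n (a n) ih).1.1
  have hsucc : ∀ n, prodSuccLin K k0 (a n) (a (n + 1)) ∧
      f (a (n + 1)).2 < t (a n) + (1 / 2) ^ n := by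
    intro n
    have := hstepspec n (a n) (haA n)
    rw [← haS n] at this
    exact ⟨this.1.2, this.2⟩
  have hasc : ∀ n m : ℕ, n ≤ m → prodSuccLin K k0 (a n) (a m) := by
    intro n m h
    induction m, h using Nat.le_induction with
    | base => exact hrefl _
    | succ m hm ih => exact htrans ih (hsucc m).1
  set g : ℕ → ℝ := fun n => f (a n).2 with hg
  have hganti : Antitone g := by
    apply antitone_nat_of_succ_le
    intro n
    have h1 := hkey _ _ (hsucc n).1
    nlinarith [dist_nonneg (x := (a n).1) (y := (a (n + 1)).1)]
  have hgbdd : BddBelow (Set.range g) := by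
    refine ⟨f ytilde, ?_⟩
    rintro _ ⟨n, rfl⟩
    exact hlow _ (haA n)
  set L : ℝ := ⨅ n, g n with hL
  have hgtend : Filter.Tendsto g Filter.atTop (nhds L) := tendsto_atTop_ciInf hganti hgbdd
  have hgLle : ∀ n, L ≤ g n := fun n => ciInf_le hgbdd n
  -- the first coordinates form a Cauchy sequence
  have hcau : CauchySeq (fun n => (a n).1) := by
    apply cauchySeq_of_le_tendsto_0 (fun N => (g N - L) / c)
    · intro n m N hn hm
      have key : ∀ i j : ℕ, i ≤ j → N ≤ i → dist (a i).1 (a j).1 ≤ (g N - L) / c := by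
        intro i j hij hNi
        have h1 := hkey _ _ (hasc i j hij)
        rw [le_div_iff₀ hck]
        have h2 : g i ≤ g N := hganti hNi
        have h3 : L ≤ g j := hgLle j
        nlinarith [mul_comm (dist (a i).1 (a j).1) c]
      rcases le_total n m with h | h
      · exact key n m h hn
      · rw [dist_comm]; exact key m n h hm
    · have h1 : Filter.Tendsto (fun N => (g N - L) / c) Filter.atTop (nhds ((L - L) / c)) :=
        (hgtend.sub_const L).div_const c
      simpa using h1
  obtain ⟨x, hx⟩ := cauchySeq_tendsto_of_complete hcau
  obtain ⟨y, hxyA, hge⟩ := hlim a haA hasc x hx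
  refine ⟨(x, y), hxyA, ?_, ?_, ?_⟩
  · have := hge 0; rwa [ha0] at this
  · have h := hge 0
    rw [ha0] at h
    have h2 := hKcone 1 (dist p₀.1 x) zero_le_one dist_nonneg _ h _ hk0.1
    have heq : (1 : ℝ) • (p₀.2 - (x, y).2 - dist p₀.1 (x, y).1 • k0) +
        dist p₀.1 x • k0 = p₀.2 - y := by
      show (1 : ℝ) • (p₀.2 - y - dist p₀.1 x • k0) + dist p₀.1 x • k0 = p₀.2 - y
      module
    rwa [heq] at h2
  · intro r hrA hqr
    have key : ∀ n : ℕ, c * dist x r.1 < (1 / 2 : ℝ) ^ n := by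
      intro n
      have h1 : prodSuccLin K k0 (a n) r := htrans (hge n) hqr
      have h2 : t (a n) ≤ f r.2 := csInf_le (hbddS (a n)) ⟨r, ⟨hrA, h1⟩, rfl⟩
      have h3 : f y ≤ g (n + 1) := by
        have := hkey _ _ (hge (n + 1))
        have hd : 0 ≤ dist (a (n + 1)).1 (x, y).1 := dist_nonneg
        nlinarith
      have h4 := (hsucc n).2
      have h5 := hkey (x, y) r hqr
      simp only at h5
      linarith
    have h0 : c * dist x r.1 ≤ 0 := by
      have htend : Filter.Tendsto (fun n : ℕ => (1 / 2 : ℝ) ^ n) Filter.atTop (nhds 0) :=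
        tendsto_pow_atTop_nhds_zero_of_lt_one (by norm_num) (by norm_num)
      exact ge_of_tendsto htend (Filter.Eventually.of_forall fun n => (key n).le)
    have hd0 : dist x r.1 = 0 := by
      nlinarith [dist_nonneg (x := x) (y := r.1)]
    exact eq_of_dist_eq_zero hd0
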